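/- arXiv:1810.04489 — 5 statements merged into one kernel-verified Lean document; each statement's English description precedes it below -/
import Mathlib

section
/- Let w > 2. The group homomorphism from the free group on two generators a, b to SL(2,ℝ) determined by a ↦ T_w = ![![1,w],![0,1]] and b ↦ S·T_w·S⁻¹ = ![![1,0],![-w,1]] is injective; that is, T_w and S·T_w·S⁻¹ generate a free subgroup of SL(2,ℝ) of rank 2, freely generated by these two elements. -/
open MeasureTheory

/-- `S = [[0,1],[-1,0]]` as an element of `SL(2,ℝ)`. -/
noncomputable def S : Matrix.SpecialLinearGroup (Fin 2) ℝ :=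
  ⟨!![0, 1; -1, 0], by norm_num [Matrix.det_fin_two_of]⟩

/-- `T_w = [[1,w],[0,1]]` as an element of `SL(2,ℝ)`. -/
noncomputable def T (w : ℝ) : Matrix.SpecialLinearGroup (Fin 2) ℝ :=
  ⟨!![1, w; 0, 1], by norm_num [Matrix.det_fin_two_of]⟩

namespace HeckeAux

abbrev SL2 := Matrix.SpecialLinearGroup (Fin 2) ℝ

/-- nonzero vectors in ℝ² -/
def V : Type := {v : Fin 2 → ℝ // v ≠ 0}

lemma mulVec_apply (M : Matrix (Fin 2) (Fin 2) ℝ) (v : Fin 2 → ℝ) (i : Fin 2) :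
    M.mulVec v i = M i 0 * v 0 + M i 1 * v 1 := by
  simp [Matrix.mulVec, dotProduct, Fin.sum_univ_two]

lemma mulVec_ne_zero (g : SL2) {v : Fin 2 → ℝ} (hv : v ≠ 0) :
    (g : Matrix (Fin 2) (Fin 2) ℝ).mulVec v ≠ 0 := by
  intro h
  apply hv
  have h2 : ((g⁻¹ : SL2) : Matrix (Fin 2) (Fin 2) ℝ).mulVec
      ((g : Matrix (Fin 2) (Fin 2) ℝ).mulVec v) = 0 := by rw [h]; simp
  rwa [Matrix.mulVec_mulVec, ← Matrix.SpecialLinearGroup.coe_mul, inv_mul_cancel,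
    Matrix.SpecialLinearGroup.coe_one, Matrix.one_mulVec] at h2

instance : MulAction SL2 V where
  smul g v := ⟨(g : Matrix (Fin 2) (Fin 2) ℝ).mulVec v.1, mulVec_ne_zero g v.2⟩
  one_smul v := by
    apply Subtype.ext
    show ((1 : SL2) : Matrix (Fin 2) (Fin 2) ℝ).mulVec v.1 = v.1
    rw [Matrix.SpecialLinearGroup.coe_one, Matrix.one_mulVec]
  mul_smul g h v := by
    apply Subtype.ext
    show ((g * h : SL2) : Matrix (Fin 2) (Fin 2) ℝ).mulVec v.1 = _
    rw [Matrix.SpecialLinearGroup.coe_mul, ← Matrix.mulVec_mulVec]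
    rfl

lemma smul_coe (g : SL2) (v : V) :
    (g • v).1 = (g : Matrix (Fin 2) (Fin 2) ℝ).mulVec v.1 := rfl

lemma smul_apply (g : SL2) (u : V) (i : Fin 2) :
    (g • u).1 i = (g : Matrix (Fin 2) (Fin 2) ℝ) i 0 * u.1 0
      + (g : Matrix (Fin 2) (Fin 2) ℝ) i 1 * u.1 1 := by
  rw [smul_coe, mulVec_apply]

lemma T_inv (w : ℝ) : (T w)⁻¹ = T (-w) := by
  apply inv_eq_of_mul_eq_one_right
  apply Subtype.ext
  rw [Matrix.SpecialLinearGroup.coe_mul]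
  show (!![1, w; 0, 1] : Matrix (Fin 2) (Fin 2) ℝ) * !![1, -w; 0, 1] = _
  rw [Matrix.mul_fin_two, Matrix.SpecialLinearGroup.coe_one]
  norm_num
  exact (Matrix.one_fin_two).symm

lemma S_inv : S⁻¹ = (id ⟨!![0, -1; 1, 0], by norm_num [Matrix.det_fin_two_of]⟩ : SL2) := by
  apply inv_eq_of_mul_eq_one_right
  apply Subtype.ext
  rw [Matrix.SpecialLinearGroup.coe_mul]
  show (!![0, 1; -1, 0] : Matrix (Fin 2) (Fin 2) ℝ) * !![0, -1; 1, 0] = _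
  rw [Matrix.mul_fin_two, Matrix.SpecialLinearGroup.coe_one]
  norm_num
  exact (Matrix.one_fin_two).symm

lemma L_coe (w : ℝ) : ((S * T w * S⁻¹ : SL2) : Matrix (Fin 2) (Fin 2) ℝ)
    = !![1, 0; -w, 1] := by
  rw [S_inv, Matrix.SpecialLinearGroup.coe_mul, Matrix.SpecialLinearGroup.coe_mul]
  show (!![0, 1; -1, 0] : Matrix (Fin 2) (Fin 2) ℝ) * !![1, w; 0, 1] * !![0, -1; 1, 0] = _
  rw [Matrix.mul_fin_two, Matrix.mul_fin_two]
  norm_num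

lemma L_inv_coe (w : ℝ) : (((S * T w * S⁻¹)⁻¹ : SL2) : Matrix (Fin 2) (Fin 2) ℝ)
    = !![1, 0; w, 1] := by
  have : (S * T w * S⁻¹)⁻¹ = S * T (-w) * S⁻¹ := by
    rw [mul_inv_rev, mul_inv_rev, T_inv, inv_inv]
    group
  rw [this, L_coe]
  norm_num

def XT : Set V := {v : V | v.1 1 ^ 2 ≤ v.1 0 * v.1 1}
def XL : Set V := {v : V | v.1 0 * v.1 1 ≤ -(v.1 0 ^ 2)}
def YT (w : ℝ) : Set V := {v : V | v.1 0 * v.1 1 < (1 - w) * v.1 1 ^ 2}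
def YL (w : ℝ) : Set V := {v : V | (w - 1) * v.1 0 ^ 2 < v.1 0 * v.1 1}

lemma Vne (v : V) : v.1 0 ≠ 0 ∨ v.1 1 ≠ 0 := by
  by_contra h
  push_neg at h
  exact v.2 (funext fun i => by fin_cases i <;> simp [h.1, h.2])

end HeckeAux

open HeckeAux Pointwise in
theorem free_subgroup_of_hecke (w : ℝ) (hw : 2 < w) :
    Function.Injective
      (FreeGroup.lift (fun b : Bool => if b then T w else S * T w * S⁻¹)) := by
  apply FreeGroup.injective_lift_of_ping_pong _ (fun b : Bool => if b then XT else XL)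
    (fun b : Bool => if b then YT w else YL w)
  · -- nonempty
    intro b
    cases b <;> simp only [if_true, if_false, Bool.false_eq_true]
    · exact ⟨⟨![1, -1], fun h => by simpa using congrFun h 1⟩, by
        show (![1, -1] : Fin 2 → ℝ) 0 * (![1, -1] : Fin 2 → ℝ) 1 ≤ -((![1, -1] : Fin 2 → ℝ) 0) ^ 2
        norm_num⟩
    · exact ⟨⟨![1, 0], fun h => by simpa using congrFun h 0⟩, by
        show ((![1, 0] : Fin 2 → ℝ) 1) ^ 2 ≤ (![1, 0] : Fin 2 → ℝ) 0 * (![1, 0] : Fin 2 → ℝ) 1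
        norm_num⟩
  · -- X pairwise disjoint
    intro i j hij
    simp only [Function.onFun]
    rw [Set.disjoint_left]
    intro v hvi hvj
    have hxy := Vne v
    cases i <;> cases j <;> try exact absurd rfl hij
    all_goals
      simp only [if_true, if_false, Bool.false_eq_true, XT, XL, Set.mem_setOf_eq] at hvi hvj
    all_goals
      rcases hxy with h | h <;>
        nlinarith [sq_nonneg (v.1 0), sq_nonneg (v.1 1), sq_pos_of_ne_zero h]
  · -- Y pairwise disjoint
    intro i j hij
    simp only [Function.onFun]
    rw [Set.disjoint_left]
    intro v hvi hvj
    cases i <;> cases j <;> try exact absurd rfl hij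
    all_goals
      simp only [if_true, if_false, Bool.false_eq_true, YT, YL, Set.mem_setOf_eq] at hvi hvj
    all_goals
      nlinarith [sq_nonneg (v.1 0), sq_nonneg (v.1 1),
        mul_nonneg (by linarith : (0:ℝ) ≤ w - 1) (sq_nonneg (v.1 0)),
        mul_nonneg (by linarith : (0:ℝ) ≤ w - 1) (sq_nonneg (v.1 1))]
  · -- X i disjoint Y j
    intro i j
    rw [Set.disjoint_left]
    intro v hvi hvj
    cases i <;> cases j <;>
      simp only [if_true, if_false, Bool.false_eq_true, XT, XL, YT, YL,
        Set.mem_setOf_eq] at hvi hvj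
    · -- XL ∩ YL
      nlinarith [sq_nonneg (v.1 0), mul_nonneg (by linarith : (0:ℝ) ≤ w - 1) (sq_nonneg (v.1 0))]
    · -- XL ∩ YT
      nlinarith [sq_nonneg (v.1 0), sq_nonneg (v.1 1), sq_nonneg (v.1 0 * v.1 1),
        mul_nonneg (by linarith : (0:ℝ) ≤ w - 1) (sq_nonneg (v.1 1)),
        mul_nonneg (by linarith : (0:ℝ) ≤ w - 2) (sq_nonneg (v.1 0 * v.1 1)),
        sq_nonneg (v.1 0 + v.1 1), sq_nonneg (v.1 0 - v.1 1)]
    · -- XT ∩ YL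
      nlinarith [sq_nonneg (v.1 0 - v.1 1),
        mul_nonneg (by linarith : (0:ℝ) ≤ w - 2) (sq_nonneg (v.1 0))]
    · -- XT ∩ YT
      nlinarith [mul_nonneg (by linarith : (0:ℝ) ≤ w) (sq_nonneg (v.1 1))]
  · -- hX : a i • (Y i)ᶜ ⊆ X i
    intro i
    rintro v ⟨u, hu, rfl⟩
    cases i
    · -- L = S T S⁻¹, acts by (x, y) ↦ (x, -w x + y)
      simp only [Set.mem_compl_iff, if_false, Bool.false_eq_true, YL,
        Set.mem_setOf_eq, not_lt] at hu
      simp only [if_false, Bool.false_eq_true, XL, Set.mem_setOf_eq]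
      show (((S * T w * S⁻¹ : SL2) : Matrix (Fin 2) (Fin 2) ℝ).mulVec u.1) 0 * (((S * T w * S⁻¹ : SL2) : Matrix (Fin 2) (Fin 2) ℝ).mulVec u.1) 1 ≤ -((((S * T w * S⁻¹ : SL2) : Matrix (Fin 2) (Fin 2) ℝ).mulVec u.1) 0) ^ 2
      rw [L_coe]
      simp only [mulVec_apply, Matrix.of_apply, Matrix.cons_val', Matrix.cons_val_zero,
        Matrix.cons_val_one, Matrix.head_cons, Matrix.empty_val', Matrix.cons_val_fin_one,
        Matrix.head_fin_const, one_mul, zero_mul, neg_mul, add_zero, zero_add]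
      nlinarith [sq_nonneg (u.1 0)]
    · simp only [Set.mem_compl_iff, if_true, YT, Set.mem_setOf_eq, not_lt] at hu
      simp only [if_true, XT, Set.mem_setOf_eq]
      show (((!![1, w; 0, 1] : Matrix (Fin 2) (Fin 2) ℝ).mulVec u.1) 1) ^ 2 ≤ ((!![1, w; 0, 1] : Matrix (Fin 2) (Fin 2) ℝ).mulVec u.1) 0 * ((!![1, w; 0, 1] : Matrix (Fin 2) (Fin 2) ℝ).mulVec u.1) 1
      simp only [mulVec_apply, Matrix.of_apply, Matrix.cons_val', Matrix.cons_val_zero,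
        Matrix.cons_val_one, Matrix.head_cons, Matrix.empty_val', Matrix.cons_val_fin_one,
        Matrix.head_fin_const, one_mul, zero_mul, neg_mul, add_zero, zero_add]
      nlinarith [sq_nonneg (u.1 1)]
  · -- hY : a⁻¹ i • (X i)ᶜ ⊆ Y i
    intro i
    rintro v ⟨u, hu, rfl⟩
    simp only [Pi.inv_apply]
    cases i
    · -- L⁻¹ acts by (x, y) ↦ (x, w x + y)
      simp only [Set.mem_compl_iff, if_false, Bool.false_eq_true, XL,
        Set.mem_setOf_eq, not_le] at hu
      simp only [if_false, Bool.false_eq_true, YL, Set.mem_setOf_eq]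
      show (w - 1) * (((((S * T w * S⁻¹ : SL2)⁻¹ : SL2) : Matrix (Fin 2) (Fin 2) ℝ).mulVec u.1) 0) ^ 2 < ((((S * T w * S⁻¹ : SL2)⁻¹ : SL2) : Matrix (Fin 2) (Fin 2) ℝ).mulVec u.1) 0 * ((((S * T w * S⁻¹ : SL2)⁻¹ : SL2) : Matrix (Fin 2) (Fin 2) ℝ).mulVec u.1) 1
      rw [L_inv_coe]
      simp only [mulVec_apply, Matrix.of_apply, Matrix.cons_val', Matrix.cons_val_zero,
        Matrix.cons_val_one, Matrix.head_cons, Matrix.empty_val', Matrix.cons_val_fin_one,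
        Matrix.head_fin_const, one_mul, zero_mul, neg_mul, add_zero, zero_add]
      nlinarith [sq_nonneg (u.1 0)]
    · simp only [Set.mem_compl_iff, if_true, XT, Set.mem_setOf_eq, not_le] at hu
      simp only [if_true, YT, Set.mem_setOf_eq]
      show ((((T w : SL2)⁻¹ : SL2) : Matrix (Fin 2) (Fin 2) ℝ).mulVec u.1) 0 * ((((T w : SL2)⁻¹ : SL2) : Matrix (Fin 2) (Fin 2) ℝ).mulVec u.1) 1 < (1 - w) * (((((T w : SL2)⁻¹ : SL2) : Matrix (Fin 2) (Fin 2) ℝ).mulVec u.1) 1) ^ 2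
      rw [T_inv]
      show ((!![1, -w; 0, 1] : Matrix (Fin 2) (Fin 2) ℝ).mulVec u.1) 0 * ((!![1, -w; 0, 1] : Matrix (Fin 2) (Fin 2) ℝ).mulVec u.1) 1 < (1 - w) * (((!![1, -w; 0, 1] : Matrix (Fin 2) (Fin 2) ℝ).mulVec u.1) 1) ^ 2
      simp only [mulVec_apply, Matrix.of_apply, Matrix.cons_val', Matrix.cons_val_zero,
        Matrix.cons_val_one, Matrix.head_cons, Matrix.empty_val', Matrix.cons_val_fin_one,
        Matrix.head_fin_const, one_mul, zero_mul, neg_mul, add_zero, zero_add]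
      nlinarith [sq_nonneg (u.1 1)]
end

section
/- Let λ ∈ (0,1), let z ∈ ℂ with |z| < 1, and let s ∈ ℂ with Re(s) > 0. Then the series Σ_{n=1}^∞ e^{2πinλ}·(n + z)^(−s) converges, i.e., the sequence of partial sums N ↦ Σ_{n=1}^N e^{2πinλ}·(n + z)^(−s) converges in ℂ. -/
open Filter Finset Complex

private lemma dirichlet_bv {f g : ℕ → ℂ} {b : ℝ}
    (hf0 : Tendsto f atTop (nhds 0))
    (hfv : Summable fun n => ‖f (n + 1) - f n‖)
    (hgb : ∀ n, ‖∑ i ∈ range n, g i‖ ≤ b) :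
    CauchySeq fun n => ∑ i ∈ range n, f i * g i := by
  rw [← cauchySeq_shift 1]
  simp_rw [← smul_eq_mul, Finset.sum_range_by_parts _ _ (Nat.succ _),
    Nat.succ_sub_succ_eq_sub, tsub_zero, sub_eq_add_neg]
  apply (NormedField.tendsto_zero_smul_of_tendsto_zero_of_bounded hf0
    ⟨b, eventually_map.mpr <| Eventually.of_forall fun n => hgb (n + 1)⟩).cauchySeq.add
  refine CauchySeq.neg ?_
  refine cauchySeq_range_of_norm_bounded (g := fun n => ‖f (n + 1) - f n‖ * b) ?_ (fun n => ?_)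
  · exact ((hfv.mul_right b).hasSum.tendsto_sum_nat).cauchySeq
  · rw [norm_smul]
    exact mul_le_mul_of_nonneg_left (hgb _) (norm_nonneg _)

private lemma norm_cpow_aux {u : ℂ} (hu : 0 ≤ u.re) (hu0 : u ≠ 0) (c : ℂ) :
    ‖u ^ c‖ ≤ ‖u‖ ^ c.re * Real.exp (Real.pi / 2 * |c.im|) := by
  rw [Complex.norm_cpow_of_ne_zero hu0]
  have harg : -(Real.pi / 2 * |c.im|) ≤ u.arg * c.im := by
    have h1 : |u.arg * c.im| ≤ Real.pi / 2 * |c.im| := by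
      rw [abs_mul]
      exact mul_le_mul_of_nonneg_right (Complex.abs_arg_le_pi_div_two_iff.mpr hu) (abs_nonneg _)
    linarith [neg_abs_le (u.arg * c.im)]
  have h2 : Real.exp (-(Real.pi / 2 * |c.im|)) ≤ Real.exp (u.arg * c.im) :=
    Real.exp_le_exp.2 harg
  calc ‖u‖ ^ c.re / Real.exp (u.arg * c.im)
      ≤ ‖u‖ ^ c.re / Real.exp (-(Real.pi / 2 * |c.im|)) :=
        div_le_div_of_nonneg_left (Real.rpow_nonneg (norm_nonneg _) _)
          (Real.exp_pos _) h2
    _ = ‖u‖ ^ c.re * Real.exp (Real.pi / 2 * |c.im|) := by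
        rw [Real.exp_neg, div_eq_mul_inv, inv_inv]

theorem lerch_series_converges (lam : ℝ) (hlam : lam ∈ Set.Ioo (0 : ℝ) 1)
    (z : ℂ) (hz : ‖z‖ < 1) (s : ℂ) (hs : 0 < s.re) :
    ∃ L : ℂ, Filter.Tendsto
      (fun N : ℕ => ∑ n ∈ Finset.range N,
        Complex.exp (2 * Real.pi * Complex.I * ((n : ℂ) + 1) * lam) *
          (((n : ℂ) + 1) + z) ^ (-s))
      Filter.atTop (nhds L) := by
  obtain ⟨hl0, hl1⟩ := hlam
  have hzre : -1 < z.re := by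
    have := Complex.abs_re_le_norm z
    have := neg_abs_le z.re
    linarith [abs_le.1 (le_of_lt (lt_of_le_of_lt (Complex.abs_re_le_norm z) hz))]
  set w : ℂ := Complex.exp (2 * Real.pi * Complex.I * lam) with hw
  have hw1 : w ≠ 1 := by
    intro hcon
    rw [hw, Complex.exp_eq_one_iff] at hcon
    obtain ⟨k, hk⟩ := hcon
    have h2pi : (2 * (Real.pi : ℂ) * Complex.I) ≠ 0 := by
      simp [Real.pi_ne_zero, Complex.I_ne_zero]
    have hk' : (lam : ℂ) * (2 * Real.pi * Complex.I) = (k : ℂ) * (2 * Real.pi * Complex.I) := by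
      rw [← hk]; ring
    have : (lam : ℂ) = (k : ℂ) := mul_right_cancel₀ h2pi hk'
    have hlr : lam = (k : ℝ) := by exact_mod_cast this
    rw [hlr] at hl0 hl1
    have : (0 : ℤ) < k := by exact_mod_cast hl0
    have : k < 1 := by exact_mod_cast hl1
    omega
  -- the exponential terms
  have hg : ∀ n : ℕ, Complex.exp (2 * Real.pi * Complex.I * ((n : ℂ) + 1) * lam)
      = w ^ (n + 1) := by
    intro n
    rw [hw, ← Complex.exp_nat_mul]
    congr 1
    push_cast
    ring
  have hwabs : ∀ m : ℕ, ‖w ^ m‖ = 1 := by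
    intro m
    rw [norm_pow, hw]
    have : 2 * (Real.pi : ℂ) * Complex.I * lam = ((2 * Real.pi * lam : ℝ) : ℂ) * Complex.I := by
      push_cast; ring
    rw [this, Complex.norm_exp_ofReal_mul_I, one_pow]
  have hGb : ∀ n, ‖∑ i ∈ range n, w ^ (i + 1)‖ ≤ 2 / ‖w - 1‖ := by
    intro n
    have hsum : ∑ i ∈ range n, w ^ (i + 1) = w * ((w ^ n - 1) / (w - 1)) := by
      rw [← geom_sum_eq hw1 n, Finset.mul_sum]
      simp [pow_succ, mul_comm]
    rw [hsum, norm_mul, norm_div]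
    have h1 : ‖w‖ = 1 := by simpa using hwabs 1
    rw [h1, one_mul]
    gcongr
    calc ‖w ^ n - 1‖ ≤ ‖w ^ n‖ + ‖(1 : ℂ)‖ := norm_sub_le _ _
      _ = 2 := by rw [hwabs n, norm_one]; norm_num
  -- basic facts about n + 1 + z
  set K : ℝ := Real.exp (Real.pi / 2 * |s.im|) with hK
  have hK0 : 0 < K := Real.exp_pos _
  have hu_re : ∀ t : ℝ, 1 ≤ t → t - 1 ≤ (((t : ℂ)) + z).re := by
    intro t ht
    simp only [Complex.add_re, Complex.ofReal_re]
    linarith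
  have hu_ne : ∀ t : ℝ, 1 ≤ t → ((t : ℂ) + z) ≠ 0 ∧ 0 ≤ ((t : ℂ) + z).re := by
    intro t ht
    have hre : 0 ≤ ((t : ℂ) + z).re := by linarith [hu_re t ht]
    constructor
    · intro h
      rw [h] at hre
      have := hu_re t ht
      rw [h] at this
      simp only [Complex.zero_re] at this
      -- t - 1 ≤ 0 together with (t:ℂ)+z = 0 means z = -t, abs z = t ≥ 1
      have hz' : z = -(t : ℂ) := by linear_combination h
      rw [hz'] at hz
      simp only [norm_neg, Complex.norm_real, Real.norm_eq_abs] at hz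
      rw [_root_.abs_of_nonneg (by linarith : (0:ℝ) ≤ t)] at hz
      linarith
    · exact hre
  have hu_abs : ∀ t : ℝ, 1 ≤ t → t - 1 ≤ ‖(t : ℂ) + z‖ := by
    intro t ht
    exact le_trans (hu_re t ht) (Complex.re_le_norm _)
  -- f tends to zero
  set f : ℕ → ℂ := fun n => (((n : ℂ) + 1) + z) ^ (-s) with hf
  have hcast : ∀ n : ℕ, ((n : ℂ) + 1) + z = (((n : ℝ) + 1 : ℝ) : ℂ) + z := by
    intro n; push_cast; ring
  have hfnorm : ∀ n : ℕ, 1 ≤ n → ‖f n‖ ≤ (n : ℝ) ^ (-s.re) * K := by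
    intro n hn
    have hn1 : (1 : ℝ) ≤ (n : ℝ) + 1 := by
      have : (0:ℝ) ≤ (n:ℝ) := Nat.cast_nonneg n
      linarith
    obtain ⟨hne, hre⟩ := hu_ne ((n : ℝ) + 1) hn1
    have habs := hu_abs ((n : ℝ) + 1) hn1
    have hb := norm_cpow_aux hre hne (-s)
    rw [hf]; simp only []
    rw [hcast n]
    refine le_trans hb ?_
    have him : |(-s).im| = |s.im| := by simp
    have hre' : (-s).re = -s.re := by simp
    rw [him, hre', ← hK]
    have hnpos : (0 : ℝ) < n := by exact_mod_cast hn
    refine mul_le_mul_of_nonneg_right ?_ (le_of_lt hK0)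
    exact Real.rpow_le_rpow_of_nonpos hnpos (by linarith) (by linarith)
  have hf0 : Tendsto f atTop (nhds 0) := by
    rw [tendsto_zero_iff_norm_tendsto_zero]
    apply squeeze_zero' (Eventually.of_forall fun n => norm_nonneg _)
      (eventually_atTop.2 ⟨1, fun n hn => hfnorm n hn⟩)
    have : Tendsto (fun n : ℕ => (n : ℝ) ^ (-s.re)) atTop (nhds 0) :=
      (tendsto_rpow_neg_atTop hs).comp tendsto_natCast_atTop_atTop
    simpa using this.mul_const K
  -- bounded variation
  have hvar : ∀ n : ℕ, 1 ≤ n →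
      ‖f (n + 1) - f n‖ ≤ ‖s‖ * ((n : ℝ) ^ (-(s.re + 1)) * K) := by
    intro n hn
    set S : Set ℝ := Set.Icc ((n : ℝ) + 1) ((n : ℝ) + 2) with hS
    set φ : ℝ → ℂ := fun t => ((t : ℂ) + z) ^ (-s) with hφ
    set φ' : ℝ → ℂ := fun t => -s * ((t : ℂ) + z) ^ (-s - 1) * 1 with hφ'
    have hnpos : (0 : ℝ) < n := by exact_mod_cast hn
    have hderiv : ∀ t ∈ S, HasDerivWithinAt φ (φ' t) S t := by
      intro t ht
      have ht1 : (1 : ℝ) ≤ t := by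
        rcases ht with ⟨h1, _⟩; linarith
      have hslit : ((t : ℂ) + z) ∈ Complex.slitPlane := by
        apply Complex.mem_slitPlane_iff.2
        left
        simp only [Complex.add_re, Complex.ofReal_re]
        linarith [hu_re t ht1, hn, hnpos, (ht.1 : (n : ℝ) + 1 ≤ t)]
      have h1 : HasDerivAt (fun t : ℝ => ((t : ℂ) + z)) 1 t :=
        ((hasDerivAt_id t).ofReal_comp).add_const z
      have houter : HasDerivAt (fun u : ℂ => u ^ (-s))
          (-s * ((t : ℂ) + z) ^ (-s - 1)) ((t : ℂ) + z) :=
        (Complex.hasStrictDerivAt_cpow_const hslit).hasDerivAt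
      have h2 := houter.comp t h1
      have h3 : HasDerivAt (fun t : ℝ => ((t : ℂ) + z) ^ (-s))
          (-s * ((t : ℂ) + z) ^ (-s - 1) * 1) t := h2
      exact h3.hasDerivWithinAt
    have hbound : ∀ t ∈ S, ‖φ' t‖ ≤ ‖s‖ * ((n : ℝ) ^ (-(s.re + 1)) * K) := by
      intro t ht
      have ht1 : (1 : ℝ) ≤ t := by rcases ht with ⟨h1, _⟩; linarith
      obtain ⟨hne, hre⟩ := hu_ne t ht1
      have habs := hu_abs t ht1
      rw [hφ']
      simp only [mul_one, norm_mul, norm_neg]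
      gcongr
      refine le_trans (norm_cpow_aux hre hne (-s - 1)) ?_
      have him : |(-s - 1).im| = |s.im| := by simp
      have hre' : (-s - 1).re = -(s.re + 1) := by simp; ring
      rw [him, hre', ← hK]
      refine mul_le_mul_of_nonneg_right ?_ (le_of_lt hK0)
      refine Real.rpow_le_rpow_of_nonpos hnpos ?_ (by linarith)
      have hts : (n : ℝ) + 1 ≤ t := ht.1
      linarith [habs]
    have hmvt := (convex_Icc ((n : ℝ) + 1) ((n : ℝ) + 2)).norm_image_sub_le_of_norm_hasDerivWithin_le
      hderiv hbound (Set.left_mem_Icc.2 (by linarith)) (Set.right_mem_Icc.2 (by linarith))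
    have heq1 : φ ((n : ℝ) + 2) = f (n + 1) := by
      rw [hφ, hf]; push_cast; ring_nf
    have heq2 : φ ((n : ℝ) + 1) = f n := by
      rw [hφ, hf]; push_cast; ring_nf
    have hone : ‖((n : ℝ) + 2) - ((n : ℝ) + 1)‖ = (1 : ℝ) := by
      rw [Real.norm_eq_abs]; norm_num
    rw [heq1, heq2, hone, mul_one] at hmvt
    exact hmvt
  have hfv : Summable fun n => ‖f (n + 1) - f n‖ := by
    rw [← summable_nat_add_iff 1]
    have hmaj : Summable fun n : ℕ =>
        ‖s‖ * ((((n : ℝ) + 1) ^ (-(s.re + 1))) * K) := by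
      apply Summable.mul_left
      apply Summable.mul_right
      have : Summable fun n : ℕ => ((n : ℝ)) ^ (-(s.re + 1)) :=
        Real.summable_nat_rpow.2 (by linarith)
      have h2 := (summable_nat_add_iff 1).2 this
      refine h2.congr fun n => ?_
      push_cast
      ring_nf
    refine Summable.of_nonneg_of_le (fun n => norm_nonneg _) (fun n => ?_) hmaj
    have := hvar (n + 1) (Nat.le_add_left 1 n)
    refine le_trans this (le_of_eq ?_)
    push_cast
    ring_nf
  -- conclude
  have hcauchy : CauchySeq fun N : ℕ => ∑ n ∈ range N,
      Complex.exp (2 * Real.pi * Complex.I * ((n : ℂ) + 1) * lam) *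
        (((n : ℂ) + 1) + z) ^ (-s) := by
    have : (fun N : ℕ => ∑ n ∈ range N,
        Complex.exp (2 * Real.pi * Complex.I * ((n : ℂ) + 1) * lam) *
          (((n : ℂ) + 1) + z) ^ (-s))
        = fun N : ℕ => ∑ n ∈ range N, f n * w ^ (n + 1) := by
      funext N
      refine Finset.sum_congr rfl fun n _ => ?_
      rw [hg n, hf, mul_comm]
    rw [this]
    exact dirichlet_bv hf0 hfv hGb
  exact cauchySeq_tendsto_of_complete hcauchy
end

section
/- Let λ ∈ (0,1), let 0 < r < 1, and let σ > 0. Then there exist constants C > 0 and α > 0 such that for all s = σ + it with |t| ≥ 1 and all z = x + iy with |z| ≤ r, the Lerch zeta function H(z, s, λ) (given by its convergent series) satisfies |H(z, s, λ)| ≤ C·|t|^α·exp( (2/(1−r))·|y|·|s|·log(1 + |s|) ). -/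
open Complex Real

lemma my_abs_arg_le {w : ℂ} (hw : 0 < w.re) : |w.arg| ≤ |w.im| / w.re := by
  have h2 : |w.arg| < Real.pi / 2 := Complex.abs_arg_lt_pi_div_two_iff.2 (Or.inl hw)
  have htan : Real.tan w.arg = w.im / w.re := Complex.tan_arg w
  rcases le_or_gt 0 w.arg with h | h
  · rw [_root_.abs_of_nonneg h]
    have := Real.le_tan h (by rwa [_root_.abs_of_nonneg h] at h2)
    rw [htan] at this
    refine this.trans ?_
    gcongr
    exact le_abs_self _
  · rw [_root_.abs_of_neg h]
    have := Real.le_tan (by linarith : (0:ℝ) ≤ -w.arg) (by rwa [_root_.abs_of_neg h] at h2)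
    rw [Real.tan_neg, htan] at this
    refine this.trans ?_
    rw [← neg_div]
    gcongr
    exact neg_le_abs _

lemma my_cpow_abs_bound {r u : ℝ} (hr1 : r < 1) {z : ℂ} (hz : ‖z‖ ≤ r)
    (hu : 1 ≤ u) (s' : ℂ) (hs' : 0 ≤ s'.re) :
    ‖((u:ℂ) + z) ^ (-s')‖ ≤
      (u - r) ^ (-s'.re) * Real.exp (|z.im| * |s'.im| / (1 - r)) := by
  set w : ℂ := (u:ℂ) + z with hw
  have hzre : |z.re| ≤ r := (Complex.abs_re_le_norm z).trans hz
  have h1r : (0:ℝ) < 1 - r := by linarith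
  have hwre : u - r ≤ w.re := by
    simp only [hw, Complex.add_re, Complex.ofReal_re]
    linarith [(abs_le.1 hzre).1]
  have h1rw : 1 - r ≤ w.re := by linarith
  have hre : 0 < w.re := by linarith
  have hur : (0:ℝ) < u - r := by linarith
  have hurw : u - r ≤ ‖w‖ :=
    hwre.trans ((le_abs_self _).trans (Complex.abs_re_le_norm w))
  have hw0 : w ≠ 0 := by
    intro h
    rw [h] at hre
    simp at hre
  rw [Complex.norm_cpow_of_ne_zero hw0]
  simp only [Complex.neg_re, Complex.neg_im, mul_neg, Real.exp_neg, div_inv_eq_mul]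
  have him : w.im = z.im := by simp [hw]
  refine mul_le_mul ?_ ?_ (Real.exp_nonneg _) (Real.rpow_nonneg hur.le _)
  · exact Real.rpow_le_rpow_of_nonpos hur hurw (neg_nonpos.2 hs')
  · rw [Real.exp_le_exp]
    calc w.arg * s'.im ≤ |w.arg * s'.im| := le_abs_self _
      _ = |w.arg| * |s'.im| := abs_mul _ _
      _ ≤ (|w.im| / w.re) * |s'.im| := by
          gcongr
          exact my_abs_arg_le hre
      _ ≤ (|z.im| / (1 - r)) * |s'.im| := by
          rw [him]
          gcongr
      _ = |z.im| * |s'.im| / (1 - r) := by ring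

lemma my_diff_bound {r : ℝ} (hr1 : r < 1) {z : ℂ} (hz : ‖z‖ ≤ r)
    (s : ℂ) (hs : 0 ≤ s.re) (i : ℕ) :
    ‖((i:ℂ) + 2 + z) ^ (-s) - ((i:ℂ) + 1 + z) ^ (-s)‖ ≤
      ‖s‖ * (((i:ℝ) + 1) - r) ^ (-(s.re + 1)) *
        Real.exp (|z.im| * |s.im| / (1 - r)) := by
  have hzre : |z.re| ≤ r := (Complex.abs_re_le_norm z).trans hz
  set f : ℝ → ℂ := fun u => ((u:ℂ) + z) ^ (-s) with hf
  set D := Set.Icc ((i:ℝ) + 1) ((i:ℝ) + 2) with hDdef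
  set C0 := ‖s‖ * (((i:ℝ) + 1) - r) ^ (-(s.re + 1)) *
      Real.exp (|z.im| * |s.im| / (1 - r)) with hC0
  have hD : ∀ u ∈ D, HasDerivWithinAt f (-s * ((u:ℂ) + z) ^ (-s - 1)) D u := by
    intro u hu
    have hmem : ((u:ℂ) + z) ∈ Complex.slitPlane := by
      refine Or.inl ?_
      have : ((u:ℂ) + z).re = u + z.re := by simp
      rw [this]
      have h1 : ((i:ℝ) + 1) ≤ u := hu.1
      have h2 : (0:ℝ) ≤ (i:ℝ) := Nat.cast_nonneg i
      linarith [(abs_le.1 hzre).1]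
    have h := (((hasDerivAt_id ((u:ℝ):ℂ)).add_const z).cpow_const (c := -s) hmem).comp_ofReal
    simpa [f] using h.hasDerivWithinAt
  have hbound : ∀ u ∈ D, ‖-s * ((u:ℂ) + z) ^ (-s - 1)‖ ≤ C0 := by
    intro u hu
    have h1 : ((i:ℝ) + 1) ≤ u := hu.1
    have h2 : (0:ℝ) ≤ (i:ℝ) := Nat.cast_nonneg i
    have hu1 : (1:ℝ) ≤ u := by linarith
    rw [norm_mul, norm_neg]
    have hrw : -s - 1 = -(s + 1) := by ring
    rw [hrw]
    have hb := my_cpow_abs_bound hr1 hz hu1 (s + 1) (by simp; linarith)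
    have him : (s + 1).im = s.im := by simp
    have hre' : (s + 1).re = s.re + 1 := by simp
    rw [him, hre'] at hb
    rw [hC0, mul_assoc]
    refine mul_le_mul_of_nonneg_left (hb.trans ?_) (norm_nonneg s)
    refine mul_le_mul_of_nonneg_right ?_ (Real.exp_nonneg _)
    refine Real.rpow_le_rpow_of_nonpos (by linarith) (by linarith) (by linarith)
  have hmem1 : ((i:ℝ) + 1) ∈ D := by constructor <;> simp
  have hmem2 : ((i:ℝ) + 2) ∈ D := by constructor <;> simp
  have key := (convex_Icc ((i:ℝ) + 1) ((i:ℝ) + 2)).norm_image_sub_le_of_norm_hasDerivWithin_le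
      hD hbound hmem1 hmem2
  have hsub : ‖((i:ℝ) + 2) - ((i:ℝ) + 1)‖ = 1 := by norm_num
  rw [hsub, mul_one] at key
  have e1 : f ((i:ℝ) + 2) = ((i:ℂ) + 2 + z) ^ (-s) := by
    rw [hf]; push_cast; ring_nf
  have e2 : f ((i:ℝ) + 1) = ((i:ℂ) + 1 + z) ^ (-s) := by
    rw [hf]; push_cast; ring_nf
  rw [e1, e2] at key
  exact key

/- Growth bound for the Lerch zeta function `H(z, s, λ) = Σ_{n=1}^∞ e^{2πinλ}·(n + z)^(−s)`
(principal complex powers), given by its convergent series: `L` below denotes the limit of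
the partial sums of that series. -/
theorem lerch_growth_bound (lam : ℝ) (hlam : lam ∈ Set.Ioo (0 : ℝ) 1)
    (r : ℝ) (hr0 : 0 < r) (hr1 : r < 1) (σ : ℝ) (hσ : 0 < σ) :
    ∃ C > (0 : ℝ), ∃ α > (0 : ℝ), ∀ t x y : ℝ, 1 ≤ |t| →
      ∀ z : ℂ, z = (x : ℂ) + (y : ℂ) * Complex.I → ‖z‖ ≤ r →
      ∀ s : ℂ, s = (σ : ℂ) + (t : ℂ) * Complex.I →
      ∀ L : ℂ,
        Filter.Tendsto
          (fun N : ℕ => ∑ n ∈ Finset.range N,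
            Complex.exp (2 * Real.pi * Complex.I * ((n : ℂ) + 1) * lam) *
              (((n : ℂ) + 1) + z) ^ (-s))
          Filter.atTop (nhds L) →
        ‖L‖ ≤ C * |t| ^ α *
          Real.exp (2 / (1 - r) * |y| * ‖s‖ * Real.log (1 + ‖s‖)) := by
  obtain ⟨hlam0, hlam1⟩ := hlam
  have h1r : (0:ℝ) < 1 - r := by linarith
  -- the oscillating factor
  set e : ℂ := Complex.exp (2 * Real.pi * Complex.I * lam) with he_def
  have habs_e : ‖e‖ = 1 := by
    have : (2 * Real.pi * Complex.I * (lam:ℝ)) = ((2 * Real.pi * lam : ℝ):ℂ) * Complex.I := by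
      push_cast; ring
    rw [he_def, this, Complex.norm_exp_ofReal_mul_I]
  have he1 : e ≠ 1 := by
    intro hcon
    rw [he_def, Complex.exp_eq_one_iff] at hcon
    obtain ⟨n, hn⟩ := hcon
    have h2pi : (2 * (Real.pi:ℂ) * Complex.I) ≠ 0 := by
      simp [Real.pi_ne_zero, Complex.I_ne_zero]
    have hlc : (lam:ℂ) = (n:ℂ) := by
      have h2 : (lam:ℂ) * (2 * (Real.pi:ℂ) * Complex.I)
          = (n:ℂ) * (2 * (Real.pi:ℂ) * Complex.I) := by
        rw [← hn]; ring
      exact mul_right_cancel₀ h2pi h2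
    have hlr : lam = (n:ℝ) := by exact_mod_cast hlc
    have h0 : (0:ℤ) < n := by exact_mod_cast hlr ▸ hlam0
    have h1 : (1:ℝ) ≤ (n:ℝ) := by exact_mod_cast h0
    linarith [hlr ▸ hlam1]
  set M := 2 / ‖e - 1‖ with hM_def
  have hM : 0 < M := div_pos two_pos (norm_pos_iff.mpr (sub_ne_zero.2 he1))
  -- bounded partial sums of the oscillating factor
  have hG : ∀ N : ℕ, ‖∑ j ∈ Finset.range N,
      Complex.exp (2 * Real.pi * Complex.I * ((j:ℂ) + 1) * lam)‖ ≤ M := by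
    intro N
    have hterm : ∀ j ∈ Finset.range N, Complex.exp (2 * Real.pi * Complex.I * ((j:ℂ) + 1) * lam)
        = e ^ j * e := by
      intro j _
      rw [he_def, ← pow_succ, ← Complex.exp_nat_mul]
      congr 1
      push_cast
      ring
    rw [Finset.sum_congr rfl hterm, ← Finset.sum_mul, geom_sum_eq he1]
    rw [norm_mul, norm_div, habs_e, mul_one]
    rw [hM_def]
    gcongr
    calc ‖e ^ N - 1‖ ≤ ‖e ^ N‖ + ‖(1:ℂ)‖ := by
          simpa [sub_eq_add_neg] using norm_add_le (e ^ N) (-1)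
      _ = 2 := by rw [norm_pow, habs_e, one_pow, norm_one]; norm_num
  -- summability of the comparison series
  have hsum : Summable (fun i : ℕ => ((i:ℝ) + 1 - r) ^ (-(σ + 1))) := by
    have h1 : Summable (fun i : ℕ => ((i:ℝ) + 1) ^ (-(σ + 1))) := by
      have h0 := (Real.summable_nat_rpow (p := -(σ + 1))).mpr (by linarith)
      have h2 := (summable_nat_add_iff 1).mpr h0
      simpa using h2
    refine Summable.of_nonneg_of_le (fun i => Real.rpow_nonneg ?_ _) (fun i => ?_)
      (h1.mul_left ((1 - r) ^ (-(σ + 1))))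
    · have : (0:ℝ) ≤ (i:ℝ) := Nat.cast_nonneg i
      linarith
    · have hi : (0:ℝ) ≤ (i:ℝ) := Nat.cast_nonneg i
      have hpos : (0:ℝ) < (1 - r) * ((i:ℝ) + 1) := by nlinarith
      have hle : (1 - r) * ((i:ℝ) + 1) ≤ (i:ℝ) + 1 - r := by nlinarith
      calc ((i:ℝ) + 1 - r) ^ (-(σ + 1)) ≤ ((1 - r) * ((i:ℝ) + 1)) ^ (-(σ + 1)) :=
            Real.rpow_le_rpow_of_nonpos hpos hle (by linarith)
        _ = (1 - r) ^ (-(σ + 1)) * ((i:ℝ) + 1) ^ (-(σ + 1)) :=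
            Real.mul_rpow h1r.le (by linarith)
  set K := ∑' i : ℕ, ((i:ℝ) + 1 - r) ^ (-(σ + 1)) with hK_def
  have hK0 : 0 ≤ K := tsum_nonneg fun i => Real.rpow_nonneg
    (by linarith [Nat.cast_nonneg (α := ℝ) i]) _
  -- the constants
  refine ⟨M * ((1 - r) ^ (-σ) + (σ + 1) * K), ?_, 1, one_pos, ?_⟩
  · have hrp : (0:ℝ) < (1 - r) ^ (-σ) := Real.rpow_pos_of_pos h1r _
    have hpos : (0:ℝ) < (1 - r) ^ (-σ) + (σ + 1) * K := by nlinarith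
    exact mul_pos hM hpos
  intro t x y ht z hzxy hzr s hs L hL
  have hsre : s.re = σ := by rw [hs]; simp
  have hsim : s.im = t := by rw [hs]; simp
  have hzim : z.im = y := by rw [hzxy]; simp
  have hts : |t| ≤ ‖s‖ := hsim ▸ Complex.abs_im_le_norm s
  have habs_s1 : (1:ℝ) ≤ ‖s‖ := le_trans ht hts
  set E := Real.exp (|y| * |t| / (1 - r)) with hE_def
  set a : ℕ → ℂ := fun n => ((n:ℂ) + 1 + z) ^ (-s) with ha_def
  set c : ℕ → ℂ := fun n => Complex.exp (2 * Real.pi * Complex.I * ((n:ℂ) + 1) * lam) with hc_def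
  -- bound on individual terms
  have hA : ∀ n : ℕ, ‖a n‖ ≤ (1 - r) ^ (-σ) * E := by
    intro n
    have hn0 : (0:ℝ) ≤ (n:ℝ) := Nat.cast_nonneg n
    have h := my_cpow_abs_bound (u := (n:ℝ) + 1) hr1 hzr (by linarith) s (by rw [hsre]; linarith)
    have hco : ((((n:ℝ) + 1 : ℝ)):ℂ) + z = (n:ℂ) + 1 + z := by push_cast; ring
    rw [hco, hsre, hsim, hzim] at h
    refine h.trans ?_
    rw [hE_def]
    refine mul_le_mul_of_nonneg_right ?_ (Real.exp_nonneg _)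
    exact Real.rpow_le_rpow_of_nonpos h1r (by linarith) (by linarith)
  -- bound on differences
  have hDiff : ∀ i : ℕ, ‖a (i + 1) - a i‖ ≤
      ‖s‖ * (((i:ℝ) + 1) - r) ^ (-(σ + 1)) * E := by
    intro i
    have h := my_diff_bound hr1 hzr s (by rw [hsre]; linarith) i
    rw [hsre, hsim, hzim] at h
    have hco : a (i + 1) = ((i:ℂ) + 2 + z) ^ (-s) := by
      rw [ha_def]; push_cast; ring_nf
    have hco2 : a i = ((i:ℂ) + 1 + z) ^ (-s) := rfl
    rw [hco, hco2]
    exact h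
  -- bound on partial sums via Abel summation
  set B := M * ((1 - r) ^ (-σ) * E) + M * (‖s‖ * K * E) with hB_def
  have hpartial : ∀ N : ℕ, ‖∑ n ∈ Finset.range N, c n * a n‖ ≤ B := by
    intro N
    have hswap : ∑ n ∈ Finset.range N, c n * a n = ∑ n ∈ Finset.range N, a n • c n := by
      simp [smul_eq_mul, mul_comm]
    rw [hswap, Finset.sum_range_by_parts a c N]
    refine (norm_sub_le _ _).trans ?_
    rw [hB_def]
    have hGnorm : ∀ m : ℕ, ‖∑ j ∈ Finset.range m, c j‖ ≤ M := fun m => hG m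
    gcongr ?_ + ?_
    · rw [norm_smul]
      calc ‖a (N - 1)‖ * ‖∑ j ∈ Finset.range N, c j‖
          ≤ ((1 - r) ^ (-σ) * E) * M := by
            refine mul_le_mul (hA _) (hGnorm _) (norm_nonneg _) ?_
            exact mul_nonneg (Real.rpow_nonneg h1r.le _) (by rw [hE_def]; positivity)
        _ = M * ((1 - r) ^ (-σ) * E) := by ring
    · calc ‖∑ i ∈ Finset.range (N - 1), (a (i + 1) - a i) • (∑ j ∈ Finset.range (i + 1), c j)‖
          ≤ ∑ i ∈ Finset.range (N - 1), ‖(a (i + 1) - a i) • (∑ j ∈ Finset.range (i + 1), c j)‖ :=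
            norm_sum_le _ _
        _ ≤ ∑ i ∈ Finset.range (N - 1),
              (‖s‖ * (((i:ℝ) + 1) - r) ^ (-(σ + 1)) * E) * M := by
            refine Finset.sum_le_sum fun i _ => ?_
            rw [norm_smul]
            refine mul_le_mul (hDiff i) (hGnorm _) (norm_nonneg _) ?_
            have hi : (0:ℝ) ≤ (i:ℝ) := Nat.cast_nonneg i
            exact mul_nonneg (mul_nonneg (norm_nonneg s)
              (Real.rpow_nonneg (by linarith) _)) (by rw [hE_def]; positivity)
        _ = (M * (‖s‖ * E)) * ∑ i ∈ Finset.range (N - 1),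
              (((i:ℝ) + 1) - r) ^ (-(σ + 1)) := by
            rw [Finset.mul_sum]
            refine Finset.sum_congr rfl fun i _ => by ring
        _ ≤ (M * (‖s‖ * E)) * K := by
            refine mul_le_mul_of_nonneg_left ?_
              (mul_nonneg hM.le (mul_nonneg (norm_nonneg s) (by rw [hE_def]; positivity)))
            refine Summable.sum_le_tsum _ (fun i _ => Real.rpow_nonneg ?_ _) hsum
            linarith [Nat.cast_nonneg (α := ℝ) i]
        _ = M * (‖s‖ * K * E) := by ring
  have hLB : ‖L‖ ≤ B := by
    refine le_of_tendsto hL.norm (Filter.Eventually.of_forall fun N => ?_)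
    exact hpartial N
  -- final arithmetic
  rw [Real.rpow_one]
  have h2log : 1 ≤ 2 * Real.log (1 + ‖s‖) := by
    have h2 : (2:ℝ) ≤ 1 + ‖s‖ := by linarith
    have hlog := Real.log_le_log (by norm_num) h2
    linarith [Real.log_two_gt_d9]
  have hlog0 : 0 ≤ Real.log (1 + ‖s‖) := by linarith
  have hEle : E ≤ Real.exp (2 / (1 - r) * |y| * ‖s‖ * Real.log (1 + ‖s‖)) := by
    rw [hE_def, Real.exp_le_exp]
    have hnum : |y| * |t| ≤ |y| * ‖s‖ * (2 * Real.log (1 + ‖s‖)) := by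
      calc |y| * |t| ≤ |y| * ‖s‖ := mul_le_mul_of_nonneg_left hts (abs_nonneg y)
        _ = |y| * ‖s‖ * 1 := by ring
        _ ≤ |y| * ‖s‖ * (2 * Real.log (1 + ‖s‖)) :=
            mul_le_mul_of_nonneg_left h2log
              (mul_nonneg (abs_nonneg y) (norm_nonneg s))
    calc |y| * |t| / (1 - r) ≤ (|y| * ‖s‖ * (2 * Real.log (1 + ‖s‖))) / (1 - r) := by
          exact (div_le_div_iff_of_pos_right h1r).2 hnum
      _ = 2 / (1 - r) * |y| * ‖s‖ * Real.log (1 + ‖s‖) := by ring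
  have habs_s_le : ‖s‖ ≤ (σ + 1) * |t| := by
    have h1 : ‖s‖ ≤ σ + |t| := by
      rw [hs]
      refine (norm_add_le _ _).trans ?_
      simp [Complex.norm_real, _root_.abs_of_pos hσ]
    nlinarith
  have hstep : B ≤ (M * ((1 - r) ^ (-σ) + (σ + 1) * K)) * |t| *
      Real.exp (2 / (1 - r) * |y| * ‖s‖ * Real.log (1 + ‖s‖)) := by
    rw [hB_def]
    have hrw : M * ((1 - r) ^ (-σ) * E) + M * (‖s‖ * K * E)
        = M * ((1 - r) ^ (-σ) + ‖s‖ * K) * E := by ring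
    rw [hrw]
    have hfac : M * ((1 - r) ^ (-σ) + ‖s‖ * K) ≤
        M * ((1 - r) ^ (-σ) + (σ + 1) * K) * |t| := by
      have hrp : (0:ℝ) < (1 - r) ^ (-σ) := Real.rpow_pos_of_pos h1r _
      have hmid : (1 - r) ^ (-σ) + ‖s‖ * K ≤ ((1 - r) ^ (-σ) + (σ + 1) * K) * |t| := by
        calc (1 - r) ^ (-σ) + ‖s‖ * K
            ≤ (1 - r) ^ (-σ) * |t| + (σ + 1) * |t| * K :=
              add_le_add (le_mul_of_one_le_right hrp.le ht)
                (mul_le_mul_of_nonneg_right habs_s_le hK0)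
          _ = ((1 - r) ^ (-σ) + (σ + 1) * K) * |t| := by ring
      calc M * ((1 - r) ^ (-σ) + ‖s‖ * K)
          ≤ M * (((1 - r) ^ (-σ) + (σ + 1) * K) * |t|) :=
            mul_le_mul_of_nonneg_left hmid hM.le
        _ = M * ((1 - r) ^ (-σ) + (σ + 1) * K) * |t| := by ring
    refine mul_le_mul hfac hEle (by rw [hE_def]; positivity) ?_
    have hrp : (0:ℝ) < (1 - r) ^ (-σ) := Real.rpow_pos_of_pos h1r _
    exact mul_nonneg (mul_nonneg hM.le (by nlinarith)) (abs_nonneg t)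
  exact hLB.trans hstep
end

section
/- Let δ ∈ (0,1) and let A, C₁, C₃ > 0. Then there exist constants C > 0 and h₀ ∈ (0,1) such that for all h ∈ (0, h₀): Σ_{k=0}^∞ log(1 + C₁·h^(−A)·exp(−C₃·h^δ·k)) ≤ C·h^(−δ)·(log h)². -/
/- The summation estimate by which the singular value bound
`μ_k ≤ C₁·h^(−A)·e^(−C₃·h^δ·k)` yields the fractal determinant bound
`log|det(1−L)| = O(h^(−δ)·(log h)²)`. Here `h ^ (−A)` and `h ^ δ` are real powers. -/
theorem weyl_sum_estimate (δ A C₁ C₃ : ℝ) (hδ0 : 0 < δ) (hδ1 : δ < 1)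
    (hA : 0 < A) (hC₁ : 0 < C₁) (hC₃ : 0 < C₃) :
    ∃ C > (0 : ℝ), ∃ h₀ : ℝ, 0 < h₀ ∧ h₀ < 1 ∧ ∀ h : ℝ, 0 < h → h < h₀ →
      Summable (fun k : ℕ =>
        Real.log (1 + C₁ * h ^ (-A) * Real.exp (-C₃ * h ^ δ * (k : ℝ)))) ∧
      ∑' k : ℕ, Real.log (1 + C₁ * h ^ (-A) * Real.exp (-C₃ * h ^ δ * (k : ℝ))) ≤
        C * h ^ (-δ) * (Real.log h) ^ 2 := by
  have habs : (0:ℝ) < 1 + |Real.log C₁| + |Real.log C₁| / A := by positivity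
  refine ⟨(A+1)*(A+2)/C₃ + (A+2) + 2/C₃, by positivity,
    min (Real.exp (-(1 + |Real.log C₁| + |Real.log C₁|/A))) (C₃ ^ (-(1/δ)) : ℝ), ?_, ?_, ?_⟩
  · exact lt_min (Real.exp_pos _) (Real.rpow_pos_of_pos hC₃ _)
  · exact lt_of_le_of_lt (min_le_left _ _) (Real.exp_lt_one_iff.mpr (by linarith))
  · intro h hh0 hh1
    -- basic facts about h
    have hhe : h < Real.exp (-(1 + |Real.log C₁| + |Real.log C₁|/A)) :=
      lt_of_lt_of_le hh1 (min_le_left _ _)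
    have hh1' : h < 1 := lt_trans hhe (Real.exp_lt_one_iff.mpr (by linarith))
    set L : ℝ := -Real.log h with hLdef
    have hlogh : Real.log h < -(1 + |Real.log C₁| + |Real.log C₁|/A) := by
      calc Real.log h < Real.log (Real.exp (-(1 + |Real.log C₁| + |Real.log C₁|/A))) :=
            Real.log_lt_log hh0 hhe
        _ = _ := Real.log_exp _
    have hL : 1 + |Real.log C₁| + |Real.log C₁|/A < L := by
      simp only [hLdef]; linarith
    have habs1 : 0 ≤ |Real.log C₁| := abs_nonneg _
    have habs2 : 0 ≤ |Real.log C₁| / A := by positivity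
    have hL1 : 1 ≤ L := by linarith
    have hL3 : |Real.log C₁| ≤ L := by linarith
    have hL2 : |Real.log C₁| / A ≤ L := by linarith
    -- notation
    set a : ℝ := C₁ * h ^ (-A) with hadef
    set b : ℝ := C₃ * h ^ δ with hbdef
    set r : ℝ := Real.exp (-b) with hrdef
    have hhd0 : 0 < h ^ δ := Real.rpow_pos_of_pos hh0 δ
    have hb0 : 0 < b := by positivity
    have ha0 : 0 < a := by positivity
    have hr0 : 0 < r := Real.exp_pos _
    have hr1 : r < 1 := Real.exp_lt_one_iff.mpr (by linarith)
    -- b ≤ 1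
    have hhC₃ : h < C₃ ^ (-(1/δ)) := lt_of_lt_of_le hh1 (min_le_right _ _)
    have hb1 : b ≤ 1 := by
      have h1 : h ^ δ ≤ (C₃ ^ (-(1/δ))) ^ δ := Real.rpow_le_rpow hh0.le hhC₃.le hδ0.le
      have h2 : (C₃ ^ (-(1/δ))) ^ δ = C₃⁻¹ := by
        rw [← Real.rpow_mul hC₃.le]
        have : (-(1/δ)) * δ = -1 := by field_simp
        rw [this, Real.rpow_neg_one]
      rw [hbdef]
      calc C₃ * h ^ δ ≤ C₃ * C₃⁻¹ := by
            apply mul_le_mul_of_nonneg_left _ hC₃.le; rw [← h2]; exact h1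
        _ = 1 := mul_inv_cancel₀ hC₃.ne'
    -- log a
    have hloga : Real.log a = Real.log C₁ + A * L := by
      rw [hadef, Real.log_mul hC₁.ne' (Real.rpow_pos_of_pos hh0 _).ne',
        Real.log_rpow hh0, hLdef]; ring
    have hAL : |Real.log C₁| ≤ A * L := by
      have := (div_le_iff₀ hA).mp hL2; linarith [this]
    have hloga0 : 0 ≤ Real.log a := by
      have := neg_abs_le (Real.log C₁); linarith
    have hlogaU : Real.log a ≤ (A+1) * L := by
      have h1 := le_abs_self (Real.log C₁)
      have h2 : (A+1) * L = A * L + L := by ring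
      linarith
    have ha1 : 1 ≤ a := by
      have := Real.exp_log ha0
      have h2 : Real.exp 0 ≤ Real.exp (Real.log a) := Real.exp_le_exp.mpr hloga0
      rw [Real.exp_zero] at h2; linarith [this, h2]
    -- rewrite terms
    have hterm : ∀ k : ℕ, C₁ * h ^ (-A) * Real.exp (-C₃ * h ^ δ * (k:ℝ)) = a * r ^ k := by
      intro k
      have h1 : -C₃ * h ^ δ * (k:ℝ) = (k:ℝ) * (-b) := by rw [hbdef]; ring
      rw [h1, Real.exp_nat_mul, hadef, hrdef]
    have hnn : ∀ k : ℕ, 0 ≤ a * r ^ k := fun k => by positivity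
    have hlog_le : ∀ u : ℝ, 0 ≤ u → Real.log (1 + u) ≤ u := by
      intro u hu
      have := Real.log_le_sub_one_of_pos (show (0:ℝ) < 1 + u by linarith)
      linarith
    -- summability
    have hsum : Summable (fun k : ℕ => Real.log (1 + a * r ^ k)) := by
      apply Summable.of_nonneg_of_le (fun k => Real.log_nonneg (by linarith [hnn k]))
        (fun k => hlog_le _ (hnn k))
      exact (summable_geometric_of_lt_one hr0.le hr1).mul_left a
    have hsum' : Summable (fun k : ℕ =>
        Real.log (1 + C₁ * h ^ (-A) * Real.exp (-C₃ * h ^ δ * (k : ℝ)))) := by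
      simpa only [hterm] using hsum
    refine ⟨hsum', ?_⟩
    have heq : ∑' k : ℕ, Real.log (1 + C₁ * h ^ (-A) * Real.exp (-C₃ * h ^ δ * (k : ℝ)))
        = ∑' k : ℕ, Real.log (1 + a * r ^ k) := by
      congr 1; funext k; rw [hterm k]
    rw [heq]
    -- split the sum
    set N : ℕ := ⌈Real.log a / b⌉₊ with hNdef
    have hsplit : ∑ i ∈ Finset.range N, Real.log (1 + a * r ^ i)
        + ∑' i : ℕ, Real.log (1 + a * r ^ (i + N)) = ∑' i : ℕ, Real.log (1 + a * r ^ i) :=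
      Summable.sum_add_tsum_nat_add N hsum
    -- head bound
    have hhead : ∑ i ∈ Finset.range N, Real.log (1 + a * r ^ i) ≤ (N : ℝ) * ((A+2)*L) := by
      have hbound : ∀ i ∈ Finset.range N, Real.log (1 + a * r ^ i) ≤ (A+2)*L := by
        intro i _
        have hrk1 : r ^ i ≤ 1 := pow_le_one₀ hr0.le hr1.le
        have h1 : a * r ^ i ≤ a := mul_le_of_le_one_right ha0.le hrk1
        have h2 : Real.log (1 + a * r ^ i) ≤ Real.log (1 + a) :=
          Real.log_le_log (by linarith [hnn i]) (by linarith)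
        have h3 : Real.log (1 + a) ≤ Real.log (2 * a) :=
          Real.log_le_log (by linarith) (by linarith)
        have h4 : Real.log (2 * a) = Real.log 2 + Real.log a :=
          Real.log_mul two_ne_zero ha0.ne'
        have h5 : Real.log 2 ≤ 1 := by
          have := Real.log_le_sub_one_of_pos (show (0:ℝ) < 2 by norm_num); linarith
        linarith
      calc ∑ i ∈ Finset.range N, Real.log (1 + a * r ^ i)
          ≤ (Finset.range N).card • ((A+2)*L) := Finset.sum_le_card_nsmul _ _ _ hbound
        _ = (N : ℝ) * ((A+2)*L) := by rw [Finset.card_range, nsmul_eq_mul]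
    -- tail bound
    have hbN : Real.log a ≤ b * N := by
      have h1 : Real.log a / b ≤ (N : ℝ) := Nat.le_ceil _
      have h2 : (Real.log a / b) * b ≤ (N : ℝ) * b := mul_le_mul_of_nonneg_right h1 hb0.le
      rw [div_mul_cancel₀ _ hb0.ne'] at h2; linarith
    have harN : a * r ^ N ≤ 1 := by
      have h1 : a * r ^ N = Real.exp (Real.log a + (N:ℝ) * (-b)) := by
        rw [Real.exp_add, Real.exp_log ha0, hrdef, Real.exp_nat_mul]
      rw [h1]
      apply Real.exp_le_one_iff.mpr
      have : (N:ℝ) * (-b) = -(b * (N:ℝ)) := by ring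
      rw [this]; linarith
    have hinv : (1 - r)⁻¹ ≤ 2 / b := by
      have hb0' : (0:ℝ) < 1 + b := by linarith
      have hr_ub : r ≤ (1+b)⁻¹ := by
        rw [hrdef, Real.exp_neg]
        exact inv_anti₀ hb0' (by linarith [Real.add_one_le_exp b])
      have h6 : 1/(1+b) ≤ 1 - b/2 := by
        rw [div_le_iff₀ hb0']
        have hbb : 0 ≤ b * (1 - b) := mul_nonneg hb0.le (by linarith)
        have hring : (1 - b/2) * (1+b) = 1 + (b * (1 - b))/2 := by ring
        rw [hring]; linarith
      rw [one_div] at h6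
      have h1r : b/2 ≤ 1 - r := by linarith
      calc (1 - r)⁻¹ ≤ (b/2)⁻¹ := inv_anti₀ (by positivity) h1r
        _ = 2 / b := inv_div b 2
    have htail : ∑' i : ℕ, Real.log (1 + a * r ^ (i + N)) ≤ 2 / b := by
      have h1 : ∀ i : ℕ, Real.log (1 + a * r ^ (i + N)) ≤ (a * r ^ N) * r ^ i := by
        intro i
        have := hlog_le _ (hnn (i + N))
        calc Real.log (1 + a * r ^ (i + N)) ≤ a * r ^ (i + N) := this
          _ = (a * r ^ N) * r ^ i := by rw [pow_add]; ring
      have h2 : Summable (fun i : ℕ => (a * r ^ N) * r ^ i) :=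
        (summable_geometric_of_lt_one hr0.le hr1).mul_left _
      have hsumN : Summable (fun i : ℕ => Real.log (1 + a * r ^ (i + N))) :=
        Summable.of_nonneg_of_le (fun i => Real.log_nonneg (by linarith [hnn (i+N)])) h1 h2
      calc ∑' i : ℕ, Real.log (1 + a * r ^ (i + N))
          ≤ ∑' i : ℕ, (a * r ^ N) * r ^ i := Summable.tsum_le_tsum h1 hsumN h2
        _ = (a * r ^ N) * (1 - r)⁻¹ := by
            rw [tsum_mul_left, tsum_geometric_of_lt_one hr0.le hr1]
        _ ≤ 1 * (2 / b) := by
            exact mul_le_mul harN hinv (inv_nonneg.mpr (by linarith)) (by norm_num)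
        _ = 2 / b := one_mul _
    -- N bound
    have hNle : (N : ℝ) ≤ (A+1)*L/b + 1 := by
      have h1 : (N : ℝ) < Real.log a / b + 1 := Nat.ceil_lt_add_one (div_nonneg hloga0 hb0.le)
      have h2 : Real.log a / b ≤ (A+1)*L/b := by gcongr
      linarith
    -- final assembly
    set X : ℝ := h ^ (-δ) with hXdef
    have hXeq : X = (h ^ δ)⁻¹ := by rw [hXdef, Real.rpow_neg hh0.le]
    have hX1 : 1 ≤ X := by
      rw [hXeq]
      exact (one_le_inv₀ hhd0).mpr (Real.rpow_le_one hh0.le hh1'.le hδ0.le)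
    have hbX : 1 / b = X / C₃ := by
      rw [hXeq, hbdef]; field_simp
    have hlogsq : (Real.log h) ^ 2 = L ^ 2 := by rw [hLdef]; ring
    rw [hlogsq]
    have hAL2 : 0 ≤ (A+2)*L := by positivity
    have hheadN : (N : ℝ) * ((A+2)*L) ≤ ((A+1)*L/b + 1) * ((A+2)*L) :=
      mul_le_mul_of_nonneg_right hNle hAL2
    have e1 : ((A+1)*L/b) * ((A+2)*L) = (A+1)*(A+2)/C₃ * (X * L^2) := by
      rw [div_mul_eq_mul_div, div_eq_mul_one_div _ b, hbX]; ring
    have hL0 : (0:ℝ) ≤ L := by linarith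
    have hLsq : 1 ≤ L^2 := by
      have h9 : (1:ℝ) * 1 ≤ L * L := mul_le_mul hL1 hL1 (by norm_num) hL0
      calc (1:ℝ) = 1 * 1 := by ring
        _ ≤ L * L := h9
        _ = L^2 := by ring
    have e2 : (A+2)*L ≤ (A+2) * (X * L^2) := by
      have h7 : L ≤ X * L^2 := by
        calc L ≤ L * L := le_mul_of_one_le_left hL0 hL1
          _ = 1 * L^2 := by ring
          _ ≤ X * L^2 := mul_le_mul_of_nonneg_right hX1 (by positivity)
      exact mul_le_mul_of_nonneg_left h7 (by linarith)
    have e3 : 2 / b ≤ 2/C₃ * (X * L^2) := by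
      have h1 : 2 / b = 2/C₃ * X := by
        rw [div_eq_mul_one_div 2 b, hbX]; ring
      rw [h1]
      have h8 : X ≤ X * L^2 := by
        calc X = X * 1 := (mul_one X).symm
          _ ≤ X * L^2 := mul_le_mul_of_nonneg_left hLsq (by positivity)
      exact mul_le_mul_of_nonneg_left h8 (by positivity)
    have htot : ∑' i : ℕ, Real.log (1 + a * r ^ i)
        ≤ ((A+1)*(A+2)/C₃ + (A+2) + 2/C₃) * (X * L^2) := by
      rw [← hsplit]
      calc ∑ i ∈ Finset.range N, Real.log (1 + a * r ^ i)
            + ∑' i : ℕ, Real.log (1 + a * r ^ (i + N))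
          ≤ ((A+1)*L/b + 1) * ((A+2)*L) + 2/b := add_le_add (hhead.trans hheadN) htail
        _ = ((A+1)*L/b) * ((A+2)*L) + (A+2)*L + 2/b := by ring
        _ ≤ (A+1)*(A+2)/C₃ * (X * L^2) + (A+2) * (X * L^2) + 2/C₃ * (X * L^2) := by
            rw [e1]; exact add_le_add (add_le_add le_rfl e2) e3
        _ = ((A+1)*(A+2)/C₃ + (A+2) + 2/C₃) * (X * L^2) := by ring
    calc ∑' i : ℕ, Real.log (1 + a * r ^ i)
        ≤ ((A+1)*(A+2)/C₃ + (A+2) + 2/C₃) * (X * L^2) := htot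
      _ = ((A+1)*(A+2)/C₃ + (A+2) + 2/C₃) * X * L^2 := by ring
end

section
/- Let w > 2, let r ∈ (1/(w−1), 1), and let f : ℂ → ℂ be holomorphic on the open ball B(0, r). Define g : ℂ → ℂ by g(u) := (f(u) − f(0))/u for u ≠ 0 and g(0) := f'(0). Then g is holomorphic on B(0, r), and for all s ∈ ℂ with Re(s) > 1/2 and all z ∈ ℂ with |z| < 1, each of the following three families indexed by n ∈ ℤ \ {0} is absolutely summable and the identity holds: Σ_{n≠0} ((z + n·w)²)^(−s)·f(−1/(z + n·w)) = f(0)·Σ_{n≠0} ((z + n·w)²)^(−s) − Σ_{n≠0} ((z + n·w)²)^(−s)·(z + n·w)^(−1)·g(−1/(z + n·w)). -/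
lemma aux_summable_int_rpow (p : ℝ) (hp : p < -1) :
    Summable (fun n : ℤ => (|n| : ℝ) ^ p) := by
  apply Summable.of_nat_of_neg <;>
  · simpa using Real.summable_nat_rpow.mpr hp

lemma aux_cpow_norm_le (u t : ℂ) (hu : u ≠ 0) :
    ‖u ^ t‖ ≤ ‖u‖ ^ t.re * Real.exp (Real.pi * |t.im|) := by
  rw [Complex.norm_cpow_of_ne_zero hu, div_eq_mul_inv, ← Real.exp_neg]
  refine mul_le_mul_of_nonneg_left (Real.exp_le_exp.2 ?_)
    (Real.rpow_nonneg (norm_nonneg _) _)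
  calc -(u.arg * t.im) ≤ |u.arg * t.im| := neg_le_abs _
    _ = |u.arg| * |t.im| := abs_mul _ _
    _ ≤ Real.pi * |t.im| := mul_le_mul_of_nonneg_right (Complex.abs_arg_le_pi u) (abs_nonneg _)


/- The one-step functional identity underlying the meromorphic continuation of the
transfer operator: `L_s f = F_s f(0) − L_{s+1/2} f̃`. Here `g` is the function
`u ↦ (f(u) − f(0))/u` (with `g(0) = f'(0)`), and all complex powers are principal
branches (`Complex.cpow`). -/
theorem transfer_operator_one_step (w : ℝ) (hw : 2 < w)
    (r : ℝ) (hr : 1 / (w - 1) < r) (hr1 : r < 1)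
    (f g : ℂ → ℂ) (hf : DifferentiableOn ℂ f (Metric.ball 0 r))
    (hg0 : g 0 = deriv f 0) (hg : ∀ u : ℂ, u ≠ 0 → g u = (f u - f 0) / u) :
    DifferentiableOn ℂ g (Metric.ball 0 r) ∧
    ∀ s : ℂ, 1 / 2 < s.re → ∀ z : ℂ, ‖z‖ < 1 →
      Summable (fun n : {n : ℤ // n ≠ 0} =>
        ‖((z + (n.1 : ℂ) * (w : ℂ)) ^ 2) ^ (-s) * f (-1 / (z + (n.1 : ℂ) * (w : ℂ)))‖) ∧
      Summable (fun n : {n : ℤ // n ≠ 0} =>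
        ‖((z + (n.1 : ℂ) * (w : ℂ)) ^ 2) ^ (-s)‖) ∧
      Summable (fun n : {n : ℤ // n ≠ 0} =>
        ‖((z + (n.1 : ℂ) * (w : ℂ)) ^ 2) ^ (-s) * (z + (n.1 : ℂ) * (w : ℂ)) ^ (-1 : ℂ) *
          g (-1 / (z + (n.1 : ℂ) * (w : ℂ)))‖) ∧
      ∑' n : {n : ℤ // n ≠ 0},
          ((z + (n.1 : ℂ) * (w : ℂ)) ^ 2) ^ (-s) * f (-1 / (z + (n.1 : ℂ) * (w : ℂ)))
        = f 0 * ∑' n : {n : ℤ // n ≠ 0}, ((z + (n.1 : ℂ) * (w : ℂ)) ^ 2) ^ (-s)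
          - ∑' n : {n : ℤ // n ≠ 0},
              ((z + (n.1 : ℂ) * (w : ℂ)) ^ 2) ^ (-s) * (z + (n.1 : ℂ) * (w : ℂ)) ^ (-1 : ℂ) *
                g (-1 / (z + (n.1 : ℂ) * (w : ℂ))) := by
  have hw1 : (1:ℝ) < w - 1 := by linarith
  have hρ : (0:ℝ) < 1 / (w - 1) := by positivity
  have hrpos : 0 < r := hρ.trans hr
  -- Part 1: `g` is differentiable.
  have hgd : DifferentiableOn ℂ g (Metric.ball 0 r) := by
    have h0 : (0:ℂ) ∈ Metric.ball (0:ℂ) r := by simpa using hrpos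
    have hd : DifferentiableOn ℂ (dslope f 0) (Metric.ball 0 r) :=
      (Complex.differentiableOn_dslope (Metric.isOpen_ball.mem_nhds h0)).mpr hf
    refine hd.congr fun u hu => ?_
    rcases eq_or_ne u 0 with rfl | h
    · rw [hg0, dslope_same]
    · rw [hg u h, dslope_of_ne f h, slope_def_field, sub_zero]
  refine ⟨hgd, fun s hs z hz => ?_⟩
  -- Bounds on `f` and `g` on the closed ball of radius `1/(w-1)`.
  have hsub : Metric.closedBall (0:ℂ) (1/(w-1)) ⊆ Metric.ball 0 r :=
    Metric.closedBall_subset_ball hr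
  obtain ⟨C, hC⟩ := (isCompact_closedBall (0:ℂ) (1/(w-1))).exists_bound_of_continuousOn
    (hf.continuousOn.mono hsub)
  obtain ⟨C', hC'⟩ := (isCompact_closedBall (0:ℂ) (1/(w-1))).exists_bound_of_continuousOn
    (hgd.continuousOn.mono hsub)
  have hC0 : 0 ≤ C := le_trans (norm_nonneg _) (hC 0 (Metric.mem_closedBall_self hρ.le))
  have hC'0 : 0 ≤ C' := le_trans (norm_nonneg _) (hC' 0 (Metric.mem_closedBall_self hρ.le))
  set E := Real.exp (Real.pi * |s.im|) with hEdef
  have hE : (0:ℝ) ≤ E := (Real.exp_pos _).le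
  -- pointwise facts
  have hn1 : ∀ n : {n : ℤ // n ≠ 0}, (1:ℝ) ≤ |(n.1 : ℝ)| := by
    intro n
    exact_mod_cast Int.one_le_abs (by exact_mod_cast n.2)
  have hdlow : ∀ n : {n : ℤ // n ≠ 0},
      |(n.1 : ℝ)| * (w - 1) ≤ ‖z + (n.1:ℂ) * w‖ := by
    intro n
    have habs : ‖(n.1:ℂ) * w‖ = |(n.1:ℝ)| * w := by
      rw [norm_mul, Complex.norm_intCast, Complex.norm_real, Real.norm_eq_abs, abs_of_pos (by linarith : (0:ℝ) < w)]
    have h1 : ‖(n.1:ℂ) * w‖ ≤ ‖z + (n.1:ℂ) * w‖ + ‖z‖ := by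
      calc ‖(n.1:ℂ) * w‖ = ‖(z + (n.1:ℂ) * w) + (-z)‖ := by ring_nf
        _ ≤ _ := by simpa using norm_add_le (z + (n.1:ℂ) * w) (-z)
    have := hn1 n
    nlinarith [hz.le]
  have hdpos : ∀ n : {n : ℤ // n ≠ 0}, 0 < ‖z + (n.1:ℂ) * w‖ := by
    intro n
    have : (0:ℝ) < |(n.1:ℝ)| * (w - 1) := by nlinarith [hn1 n]
    linarith [hdlow n]
  have hdne : ∀ n : {n : ℤ // n ≠ 0}, z + (n.1:ℂ) * w ≠ 0 := by
    intro n h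
    simpa [h] using hdpos n
  have hw1low : ∀ n : {n : ℤ // n ≠ 0}, w - 1 ≤ ‖z + (n.1:ℂ) * w‖ := by
    intro n
    have := hdlow n
    nlinarith [hn1 n]
  have hmem : ∀ n : {n : ℤ // n ≠ 0},
      -1 / (z + (n.1:ℂ) * w) ∈ Metric.closedBall (0:ℂ) (1/(w-1)) := by
    intro n
    have : ‖-1 / (z + (n.1:ℂ) * w)‖ = 1 / ‖z + (n.1:ℂ) * w‖ := by
      rw [norm_div, norm_neg, norm_one]
    simp only [Metric.mem_closedBall, Complex.dist_eq, sub_zero]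
    rw [this]
    exact one_div_le_one_div_of_le (by linarith) (hw1low n)
  -- the basic norm bound
  have hb : ∀ n : {n : ℤ // n ≠ 0},
      ‖((z + (n.1:ℂ) * w) ^ 2) ^ (-s)‖
        ≤ E * (w-1) ^ (-(2*s.re)) * |(n.1:ℝ)| ^ (-(2*s.re)) := by
    intro n
    set d := z + (n.1:ℂ) * w with hd
    have h1 : ‖(d ^ 2) ^ (-s)‖ ≤ ‖d ^ 2‖ ^ (-s).re * E := by
      have := aux_cpow_norm_le (d ^ 2) (-s) (pow_ne_zero 2 (hdne n))
      simpa [hEdef] using this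
    have h2 : ‖d ^ 2‖ ^ (-s).re = ‖d‖ ^ (-(2*s.re)) := by
      rw [norm_pow, ← Real.rpow_natCast (‖d‖) 2, ← Real.rpow_mul (hdpos n).le]
      norm_num
      rfl
    have h3 : ‖d‖ ^ (-(2*s.re)) ≤ (|(n.1:ℝ)| * (w-1)) ^ (-(2*s.re)) :=
      Real.rpow_le_rpow_of_nonpos (by nlinarith [hn1 n]) (hdlow n) (by linarith)
    have h4 : (|(n.1:ℝ)| * (w-1)) ^ (-(2*s.re))
        = |(n.1:ℝ)| ^ (-(2*s.re)) * (w-1) ^ (-(2*s.re)) :=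
      Real.mul_rpow (abs_nonneg _) (by linarith)
    calc ‖(d ^ 2) ^ (-s)‖ ≤ ‖d ^ 2‖ ^ (-s).re * E := h1
      _ = ‖d‖ ^ (-(2*s.re)) * E := by rw [h2]
      _ ≤ (|(n.1:ℝ)| * (w-1)) ^ (-(2*s.re)) * E := by
          exact mul_le_mul_of_nonneg_right h3 hE
      _ = E * (w-1) ^ (-(2*s.re)) * |(n.1:ℝ)| ^ (-(2*s.re)) := by rw [h4]; ring
  -- the comparison series
  have hsum0 : Summable (fun n : {n : ℤ // n ≠ 0} =>
      E * (w-1) ^ (-(2*s.re)) * |(n.1:ℝ)| ^ (-(2*s.re))) := by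
    apply Summable.mul_left
    have h := (aux_summable_int_rpow (-(2*s.re)) (by linarith)).subtype {n : ℤ | n ≠ 0}
    refine h.congr fun n => ?_
    simp [Int.cast_abs]
  -- summability of the three series
  have sumB : Summable (fun n : {n : ℤ // n ≠ 0} => ‖((z + (n.1:ℂ) * w) ^ 2) ^ (-s)‖) :=
    Summable.of_nonneg_of_le (fun n => norm_nonneg _) hb hsum0
  have sumA : Summable (fun n : {n : ℤ // n ≠ 0} =>
      ‖((z + (n.1:ℂ) * w) ^ 2) ^ (-s) * f (-1 / (z + (n.1:ℂ) * w))‖) := by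
    refine Summable.of_nonneg_of_le (fun n => norm_nonneg _) (fun n => ?_) (sumB.mul_right C)
    rw [norm_mul]
    exact mul_le_mul_of_nonneg_left (hC _ (hmem n)) (norm_nonneg _)
  have sumC : Summable (fun n : {n : ℤ // n ≠ 0} =>
      ‖((z + (n.1:ℂ) * w) ^ 2) ^ (-s) * (z + (n.1:ℂ) * w) ^ (-1:ℂ) *
        g (-1 / (z + (n.1:ℂ) * w))‖) := by
    refine Summable.of_nonneg_of_le (fun n => norm_nonneg _) (fun n => ?_) (sumB.mul_right C')
    rw [norm_mul, norm_mul]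
    have hinv : ‖(z + (n.1:ℂ) * w) ^ (-1:ℂ)‖ ≤ 1 := by
      rw [Complex.cpow_neg_one, norm_inv]
      rw [inv_le_one_iff₀]
      right
      linarith [hw1low n]
    calc ‖((z + (n.1:ℂ) * w) ^ 2) ^ (-s)‖ * ‖(z + (n.1:ℂ) * w) ^ (-1:ℂ)‖ *
          ‖g (-1 / (z + (n.1:ℂ) * w))‖
        ≤ ‖((z + (n.1:ℂ) * w) ^ 2) ^ (-s)‖ * 1 * C' := by
          refine mul_le_mul (mul_le_mul_of_nonneg_left hinv (norm_nonneg _))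
            (hC' _ (hmem n)) (norm_nonneg _) ?_
          positivity
      _ = ‖((z + (n.1:ℂ) * w) ^ 2) ^ (-s)‖ * C' := by ring
  refine ⟨sumA, sumB, sumC, ?_⟩
  -- the identity
  have hpt : ∀ n : {n : ℤ // n ≠ 0},
      ((z + (n.1:ℂ) * w) ^ 2) ^ (-s) * f (-1 / (z + (n.1:ℂ) * w))
        = f 0 * ((z + (n.1:ℂ) * w) ^ 2) ^ (-s)
          - ((z + (n.1:ℂ) * w) ^ 2) ^ (-s) * (z + (n.1:ℂ) * w) ^ (-1:ℂ) *
              g (-1 / (z + (n.1:ℂ) * w)) := by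
    intro n
    set d := z + (n.1:ℂ) * w with hd
    have hune : -1 / d ≠ 0 := div_ne_zero (by norm_num) (hdne n)
    have hfu : f (-1 / d) = f 0 + (-1 / d) * g (-1 / d) := by
      rw [hg _ hune, mul_comm, div_mul_cancel₀ _ hune]
      ring
    rw [hfu, Complex.cpow_neg_one]
    field_simp [hdne n]
    ring
  calc ∑' n : {n : ℤ // n ≠ 0},
        ((z + (n.1:ℂ) * w) ^ 2) ^ (-s) * f (-1 / (z + (n.1:ℂ) * w))
      = ∑' n : {n : ℤ // n ≠ 0},
          (f 0 * ((z + (n.1:ℂ) * w) ^ 2) ^ (-s)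
            - ((z + (n.1:ℂ) * w) ^ 2) ^ (-s) * (z + (n.1:ℂ) * w) ^ (-1:ℂ) *
                g (-1 / (z + (n.1:ℂ) * w))) := tsum_congr hpt
    _ = (∑' n : {n : ℤ // n ≠ 0}, f 0 * ((z + (n.1:ℂ) * w) ^ 2) ^ (-s))
        - ∑' n : {n : ℤ // n ≠ 0},
            ((z + (n.1:ℂ) * w) ^ 2) ^ (-s) * (z + (n.1:ℂ) * w) ^ (-1:ℂ) *
              g (-1 / (z + (n.1:ℂ) * w)) :=
        Summable.tsum_sub ((sumB.of_norm).mul_left (f 0)) (sumC.of_norm)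
    _ = _ := by rw [tsum_mul_left]
end
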